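/- arXiv:1209.4395 — 5 statements merged into one kernel-verified Lean document; each statement's English description precedes it below -/
import Mathlib

section
/- Let d, r, k be real numbers with d > 0, rk > 0, and 4rk > d². Then there is no sequence γ : ℕ → ℝ satisfying γ_1 = d, γ_{n+1} = d − rk/γ_n for all n ≥ 1, and γ_n > 0 for all n ≥ 1. Consequently there exists N such that any sequence satisfying γ_1 = d and the recursion (with all earlier terms nonzero) has γ_N ≤ 0. -/
noncomputable def gaux (d c : ℝ) : ℕ → ℝ
  | 0 => d
  | n + 1 => d - c / gaux d c n

/-- When `4·r·k > d²` there is no everywhere-positive solution of the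
auxiliary recursion `γ 1 = d`, `γ (n+1) = d - r*k/γ n`; consequently there is
an `N` such that any sequence satisfying the recursion (with all earlier
terms nonzero) has `γ N ≤ 0`. -/
theorem stmt_3 (d r k : ℝ) (hd : d > 0) (hrk : r * k > 0)
    (h : 4 * (r * k) > d ^ 2) :
    (¬ ∃ γ : ℕ → ℝ, γ 1 = d ∧ (∀ n, 1 ≤ n → γ (n + 1) = d - r * k / γ n) ∧
        (∀ n, 1 ≤ n → γ n > 0)) ∧
    ∃ N : ℕ, 1 ≤ N ∧ ∀ γ : ℕ → ℝ, γ 1 = d →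
      (∀ n, 1 ≤ n → n < N → γ n ≠ 0) →
      (∀ n, 1 ≤ n → n < N → γ (n + 1) = d - r * k / γ n) →
      γ N ≤ 0 := by
  set c := r * k with hc
  have key : ∃ n, gaux d c n ≤ 0 := by
    by_contra hall
    push_neg at hall
    set ε := (c - d ^ 2 / 4) / d with hε
    have hεpos : 0 < ε := div_pos (by nlinarith) hd
    have bound : ∀ n : ℕ, gaux d c n ≤ d - n * ε := by
      intro n
      induction n with
      | zero => simp [gaux]
      | succ n ih =>
        have hg := hall n
        have hgd : gaux d c n ≤ d := by
          have : (0 : ℝ) ≤ n * ε := by positivity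
          linarith
        have h1 : gaux d c (n + 1) ≤ gaux d c n - ε := by
          show d - c / gaux d c n ≤ gaux d c n - ε
          rw [sub_le_iff_le_add, ← sub_le_iff_le_add']
          rw [le_div_iff₀ hg]
          have hsq : (gaux d c n - d / 2) ^ 2 ≥ 0 := sq_nonneg _
          have hεd : ε * gaux d c n ≤ ε * d := by
            exact mul_le_mul_of_nonneg_left hgd (le_of_lt hεpos)
          have : ε * d = c - d ^ 2 / 4 := by
            rw [hε, div_mul_cancel₀ _ hd.ne']
          nlinarith
        have : ((n : ℝ) + 1) * ε = n * ε + ε := by ring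
        push_cast
        linarith
    obtain ⟨n, hn⟩ := exists_nat_gt (d / ε)
    have hb := bound n
    have hg := hall n
    have : d / ε < n := hn
    have : d < n * ε := by
      rw [div_lt_iff₀ hεpos] at hn
      linarith
    linarith
  set N0 := Nat.find key with hN0def
  have hN0 : gaux d c N0 ≤ 0 := Nat.find_spec key
  have hmin : ∀ m, m < N0 → 0 < gaux d c m := fun m hm =>
    lt_of_not_ge (Nat.find_min key hm)
  have hN0pos : 1 ≤ N0 := by
    rcases Nat.eq_zero_or_pos N0 with h0 | h1
    · exfalso
      rw [h0] at hN0
      simp only [gaux] at hN0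
      linarith
    · exact h1
  constructor
  · rintro ⟨γ, h1, hrec, hpos⟩
    have agree : ∀ m, γ (m + 1) = gaux d c m := by
      intro m
      induction m with
      | zero => simpa [gaux] using h1
      | succ m ih =>
        have := hrec (m + 1) (by omega)
        rw [this, ih]
        rfl
    have := hpos (N0 + 1) (by omega)
    rw [agree N0] at this
    linarith
  · refine ⟨N0 + 1, by omega, ?_⟩
    intro γ h1 _hne hrec
    have agree : ∀ m, m ≤ N0 → γ (m + 1) = gaux d c m := by
      intro m
      induction m with
      | zero => intro _; simpa [gaux] using h1
      | succ m ih =>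
        intro hm
        have e := ih (by omega)
        have := hrec (m + 1) (by omega) (by omega)
        rw [this, e]
        rfl
    have := agree N0 le_rfl
    rw [this]
    exact hN0
end

section
/- Let k ≥ 2 and d ≥ 2 be integers and let r ≥ 1 be an integer with 4rk ≤ d². Let x₊ := (d + √(d² − 4rk))/2 and define D : ℕ → ℝ by D_0 = 1, D_1 = d, and D_{n+1} = d·D_n^k − r·k·D_{n−1}^k·D_n^{k−1} for n ≥ 1. Then for all n ≥ 1, D_n ≥ x₊^{s_{n−1}} · d^{k^{n−1}}, where s_{n−1} := Σ_{l=0}^{n−2} k^l = (k^{n−1} − 1)/(k − 1) (with s_0 = 0). -/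
/-- Lower bound on the degeneracy recursion
`D (n+1) = d·D n ^ k - r·k·D (n-1) ^ k · D n ^ (k-1)` in the regime
`4·r·k ≤ d²`: `D n ≥ x₊ ^ s_{n-1} · d ^ (k ^ (n-1))`, with
`x₊ = (d + √(d² - 4·r·k))/2` and `s_{n-1} = ∑_{l=0}^{n-2} k ^ l`. -/
theorem stmt_8 (k d r : ℕ) (hk : 2 ≤ k) (hd : 2 ≤ d) (hr : 1 ≤ r)
    (hrk : 4 * r * k ≤ d ^ 2)
    (x : ℝ) (hx : x = ((d : ℝ) + Real.sqrt ((d : ℝ) ^ 2 - 4 * ((r : ℝ) * k))) / 2)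
    (D : ℕ → ℝ) (hD0 : D 0 = 1) (hD1 : D 1 = d)
    (hDrec : ∀ n, 1 ≤ n →
      D (n + 1) = d * D n ^ k - r * k * D (n - 1) ^ k * D n ^ (k - 1)) :
    ∀ n, 1 ≤ n →
      D n ≥ x ^ (∑ l ∈ Finset.range (n - 1), k ^ l) * (d : ℝ) ^ k ^ (n - 1) := by
  have hdR : (2:ℝ) ≤ (d:ℝ) := by exact_mod_cast hd
  have hd0 : (0:ℝ) < d := by linarith
  have hΔ : (0:ℝ) ≤ (d:ℝ) ^ 2 - 4 * ((r:ℝ) * k) := by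
    have : ((4 * r * k : ℕ) : ℝ) ≤ ((d ^ 2 : ℕ) : ℝ) := by exact_mod_cast hrk
    push_cast at this
    linarith
  set s := Real.sqrt ((d:ℝ) ^ 2 - 4 * ((r:ℝ) * k)) with hs
  have hs0 : 0 ≤ s := Real.sqrt_nonneg _
  have hs2 : s ^ 2 = (d:ℝ) ^ 2 - 4 * ((r:ℝ) * k) := Real.sq_sqrt hΔ
  have hxpos : 0 < x := by rw [hx]; linarith
  have hxd : x ≤ d := by
    have hsled : s ≤ d := by
      rw [hs]
      have h1 : (d:ℝ) ^ 2 - 4 * ((r:ℝ) * k) ≤ (d:ℝ) ^ 2 := by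
        have hr0 : (0:ℝ) ≤ (r:ℝ) * k := by positivity
        linarith
      calc Real.sqrt ((d:ℝ) ^ 2 - 4 * ((r:ℝ) * k)) ≤ Real.sqrt ((d:ℝ) ^ 2) :=
            Real.sqrt_le_sqrt h1
        _ = d := Real.sqrt_sq (le_of_lt hd0)
    rw [hx]; linarith
  have hxeq : x ^ 2 = (d:ℝ) * x - (r:ℝ) * k := by
    rw [hx]; ring_nf; nlinarith [hs2]
  -- key inductive fact
  have key : ∀ n, 0 < D n ∧ 0 < D (n + 1) ∧ x * D n ^ k ≤ D (n + 1) := by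
    intro n
    induction n with
    | zero =>
        refine ⟨by rw [hD0]; norm_num, by rw [hD1]; exact hd0, ?_⟩
        rw [hD0, hD1, one_pow, mul_one]; exact hxd
    | succ n ih =>
        obtain ⟨h0, h1, h2⟩ := ih
        have hrec := hDrec (n + 1) (by omega)
        simp only [Nat.add_sub_cancel] at hrec
        have hk1 : k - 1 + 1 = k := by omega
        have hpow : D (n + 1) ^ k = D (n + 1) ^ (k - 1) * D (n + 1) := by
          rw [← pow_succ, hk1]
        have hDn1pow : (0:ℝ) < D (n + 1) ^ (k - 1) := pow_pos h1 _
        have hrk0 : (0:ℝ) ≤ (r:ℝ) * k := by positivity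
        have hstep : (r:ℝ) * k * D n ^ k * x ≤ (r:ℝ) * k * D (n + 1) := by
          have h2' := h2
          nlinarith [h2']
        have hmain : x * (x * D (n + 1) ^ k) ≤ x * D (n + 1 + 1) := by
          have e1 : x * D (n + 1 + 1)
              = x * (d:ℝ) * D (n + 1) ^ k
                - ((r:ℝ) * k * D n ^ k * x) * D (n + 1) ^ (k - 1) := by
            rw [hrec]; ring
          have e2 : x * (x * D (n + 1) ^ k) = x ^ 2 * D (n + 1) ^ k := by ring
          rw [e1, e2, hxeq]
          have : ((r:ℝ) * k * D n ^ k * x) * D (n + 1) ^ (k - 1)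
              ≤ ((r:ℝ) * k * D (n + 1)) * D (n + 1) ^ (k - 1) := by
            exact mul_le_mul_of_nonneg_right hstep (le_of_lt hDn1pow)
          have e3 : ((r:ℝ) * k * D (n + 1)) * D (n + 1) ^ (k - 1)
              = (r:ℝ) * k * D (n + 1) ^ k := by rw [hpow]; ring
          rw [e3] at this
          nlinarith [this]
        have h3 : x * D (n + 1) ^ k ≤ D (n + 1 + 1) :=
          le_of_mul_le_mul_left hmain hxpos
        have h4 : 0 < D (n + 1 + 1) :=
          lt_of_lt_of_le (by positivity) h3
        exact ⟨h1, h4, h3⟩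
  -- now the main claim by induction
  intro n hn
  induction n, hn using Nat.le_induction with
  | base =>
      simp only [Nat.sub_self, Finset.range_zero, Finset.sum_empty, pow_zero, one_mul]
      rw [hD1]; norm_num
  | succ n hn ih =>
      have hsum : (∑ l ∈ Finset.range (n + 1 - 1), k ^ l)
          = k * (∑ l ∈ Finset.range (n - 1), k ^ l) + 1 := by
        obtain ⟨m, rfl⟩ : ∃ m, n = m + 1 := ⟨n - 1, by omega⟩
        simp only [Nat.add_sub_cancel]
        rw [Finset.sum_range_succ']
        simp [pow_succ, Finset.mul_sum, mul_comm, add_comm]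
      have hkexp : k ^ (n + 1 - 1) = k ^ (n - 1) * k := by
        obtain ⟨m, rfl⟩ : ∃ m, n = m + 1 := ⟨n - 1, by omega⟩
        simp [pow_succ]
      obtain ⟨hp0, hp1, hstep⟩ := key n
      have hBnonneg : (0:ℝ) ≤ x ^ (∑ l ∈ Finset.range (n - 1), k ^ l) * (d : ℝ) ^ k ^ (n - 1) := by
        positivity
      have hpowk : (x ^ (∑ l ∈ Finset.range (n - 1), k ^ l) * (d : ℝ) ^ k ^ (n - 1)) ^ k
          ≤ D n ^ k := by
        exact pow_le_pow_left₀ hBnonneg ih k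
      have hfinal : x ^ (∑ l ∈ Finset.range (n + 1 - 1), k ^ l) * (d : ℝ) ^ k ^ (n + 1 - 1)
          = x * (x ^ (∑ l ∈ Finset.range (n - 1), k ^ l) * (d : ℝ) ^ k ^ (n - 1)) ^ k := by
        rw [hsum, hkexp, pow_succ, mul_pow, ← pow_mul, ← pow_mul,
          mul_comm k (∑ l ∈ Finset.range (n - 1), k ^ l)]
        ring
      rw [hfinal]
      calc x * (x ^ (∑ l ∈ Finset.range (n - 1), k ^ l) * (d : ℝ) ^ k ^ (n - 1)) ^ k
          ≤ x * D n ^ k := by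
            exact mul_le_mul_of_nonneg_left hpowk (le_of_lt hxpos)
        _ ≤ D (n + 1) := hstep
end

section
/- Let k ≥ 2 and d ≥ 2 be integers and let r ≥ 1 be an integer with 4rk ≤ d². Define D : ℕ → ℝ by D_0 = 1, D_1 = d, and D_{n+1} = d·D_n^k − r·k·D_{n−1}^k·D_n^{k−1} for n ≥ 1. Then for all n ≥ 1, D_n ≥ d^{k^{n−1}}; in particular D_n > 0 for all n, so the dimension of the unfrustrated ground space grows at least doubly exponentially in n. -/
/-- In the regime `4·r·k ≤ d²` (with `k ≥ 2`, `d ≥ 2`, `r ≥ 1`) the degeneracy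
recursion satisfies `D n ≥ d ^ (k ^ (n-1))` for all `n ≥ 1`; in particular
`D n > 0` for all `n`: doubly exponential growth. -/
theorem stmt_9 (k d r : ℕ) (hk : 2 ≤ k) (hd : 2 ≤ d) (hr : 1 ≤ r)
    (hrk : 4 * r * k ≤ d ^ 2)
    (D : ℕ → ℝ) (hD0 : D 0 = 1) (hD1 : D 1 = d)
    (hDrec : ∀ n, 1 ≤ n →
      D (n + 1) = d * D n ^ k - r * k * D (n - 1) ^ k * D n ^ (k - 1)) :
    (∀ n, 1 ≤ n → D n ≥ (d : ℝ) ^ k ^ (n - 1)) ∧ ∀ n, D n > 0 := by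
  have hd2 : (2:ℝ) ≤ (d:ℝ) := by exact_mod_cast hd
  have hdpos : (0:ℝ) < d := by linarith
  have hrk' : (4:ℝ) * r * k ≤ (d:ℝ) ^ 2 := by exact_mod_cast hrk
  have hrkpos : (0:ℝ) < (r:ℝ) * k := by
    have : (0:ℝ) < (r:ℝ) := by exact_mod_cast hr
    have : (0:ℝ) < (k:ℝ) := by positivity
    positivity
  have key : ∀ n, 0 < D n ∧ (1 ≤ n →
      (d:ℝ)/2 * D (n-1) ^ k ≤ D n ∧ (d:ℝ) ^ k ^ (n-1) ≤ D n) := by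
    intro n
    induction n with
    | zero => exact ⟨by rw [hD0]; norm_num, by omega⟩
    | succ n ih =>
      rcases Nat.eq_zero_or_pos n with rfl | hn
      · refine ⟨by rw [hD1]; linarith, fun _ => ⟨?_, ?_⟩⟩
        · simp only [hD0, hD1]
          simp [one_pow]
        · simp [hD1]
      · obtain ⟨hpos, h1⟩ := ih
        obtain ⟨hA, hB⟩ := h1 hn
        have hkk : k - 1 + 1 = k := by omega
        have hnn : n - 1 + 1 = n := by omega
        have hDnk : D n ^ (k-1) * D n = D n ^ k := by
          rw [← pow_succ, hkk]
        have hpk : (0:ℝ) < D n ^ (k-1) := pow_pos hpos _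
        have hpk' : (0:ℝ) < D n ^ k := pow_pos hpos k
        -- bound r*k*D(n-1)^k ≤ (d/2) * D n
        have hbound : (r:ℝ) * k * D (n-1) ^ k ≤ (d:ℝ)/2 * D n := by
          have h1 : (r:ℝ) * k * ((d:ℝ)/2 * D (n-1) ^ k) ≤ (r:ℝ)*k * D n :=
            mul_le_mul_of_nonneg_left hA (le_of_lt hrkpos)
          nlinarith [hpos, pow_nonneg (le_of_lt hpos) k]
        have hrec := hDrec n hn
        have hstep : (d:ℝ)/2 * D n ^ k ≤ D (n+1) := by
          rw [hrec]
          have h2 : (r:ℝ) * k * D (n-1) ^ k * D n ^ (k-1)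
              ≤ ((d:ℝ)/2 * D n) * D n ^ (k-1) :=
            mul_le_mul_of_nonneg_right hbound (le_of_lt hpk)
          nlinarith [hdpos, hpk']
        have hpos' : (0:ℝ) < D (n+1) := lt_of_lt_of_le (by positivity) hstep
        refine ⟨hpos', fun _ => ?_⟩
        have hsucc : n + 1 - 1 = n := by omega
        rw [hsucc]
        refine ⟨hstep, ?_⟩
        have hBk : (d:ℝ) ^ (k ^ (n-1) * k) ≤ D n ^ k := by
          rw [pow_mul]
          exact pow_le_pow_left₀ (by positivity) hB k
        have hkn : k ^ (n-1) * k = k ^ n := by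
          rw [← pow_succ, hnn]
        rw [hkn] at hBk
        have : (d:ℝ) ^ k ^ n ≤ (d:ℝ)/2 * D n ^ k := by
          calc (d:ℝ) ^ k ^ n ≤ (d:ℝ)/2 * (d:ℝ) ^ k ^ n := by
                nlinarith [pow_pos hdpos (k ^ n)]
            _ ≤ (d:ℝ)/2 * D n ^ k := by
                apply mul_le_mul_of_nonneg_left hBk; linarith
        linarith
  exact ⟨fun n hn => (key n).2 hn |>.2, fun n => (key n).1⟩
end

section
/- Let k ≥ 1 and d ≥ 2 be integers and let r ≥ 1 be an integer with 4rk ≤ d². Define D : ℕ → ℝ by D_0 = 1, D_1 = d, and D_{n+1} = d·D_n^k − r·k·D_{n−1}^k·D_n^{k−1} for n ≥ 1. Then for all n ≥ 1, 2·D_n ≥ d·D_{n−1}^k. -/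
/-- In the regime `4·r·k ≤ d²` (with `k ≥ 1`, `d ≥ 2`, `r ≥ 1`) the degeneracy
recursion satisfies `2·D n ≥ d·D (n-1) ^ k` for all `n ≥ 1`
(equivalently `γ n ≥ d/2`). -/
theorem stmt_10 (k d r : ℕ) (hk : 1 ≤ k) (hd : 2 ≤ d) (hr : 1 ≤ r)
    (hrk : 4 * r * k ≤ d ^ 2)
    (D : ℕ → ℝ) (hD0 : D 0 = 1) (hD1 : D 1 = d)
    (hDrec : ∀ n, 1 ≤ n →
      D (n + 1) = d * D n ^ k - r * k * D (n - 1) ^ k * D n ^ (k - 1)) :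
    ∀ n, 1 ≤ n → 2 * D n ≥ d * D (n - 1) ^ k := by
  have hd' : (2:ℝ) ≤ (d:ℝ) := by exact_mod_cast hd
  have hrk' : (4:ℝ) * r * k ≤ (d:ℝ) ^ 2 := by exact_mod_cast hrk
  have hr' : (1:ℝ) ≤ (r:ℝ) := by exact_mod_cast hr
  have hk' : (1:ℝ) ≤ (k:ℝ) := by exact_mod_cast hk
  have key : ∀ n, 1 ≤ n →
      2 * D n ≥ d * D (n-1) ^ k ∧ 1 ≤ D (n-1) ∧ 1 ≤ D n := by
    intro n hn
    induction n, hn using Nat.le_induction with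
    | base =>
      refine ⟨?_, ?_, ?_⟩ <;> simp [hD0, hD1] <;> nlinarith
    | succ n hn ih =>
      obtain ⟨h1, h2, h3⟩ := ih
      have hA : (1:ℝ) ≤ D (n-1) ^ k := one_le_pow₀ h2
      have hB : (1:ℝ) ≤ D n ^ (k-1) := one_le_pow₀ h3
      have hDn : D n ≥ (d:ℝ)/2 := by nlinarith
      have hsimp : n + 1 - 1 = n := rfl
      rw [hsimp]
      have hrec := hDrec n hn
      have hpk : D n ^ k = D n * D n ^ (k-1) := by
        conv_lhs => rw [show k = (k-1) + 1 from (Nat.succ_pred_eq_of_pos hk).symm]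
        ring
      have hmain : (d:ℝ) * D n ≥ 2 * r * k * D (n-1) ^ k := by nlinarith
      have hge : 2 * D (n+1) ≥ (d:ℝ) * D n ^ k := by
        rw [hrec, hpk]; nlinarith
      have hk1 : (1:ℝ) ≤ D n ^ k := one_le_pow₀ h3
      exact ⟨hge, h3, by nlinarith⟩
  intro n hn
  exact (key n hn).1
end

section
/- Let d, k, r be positive integers with 4rk ≤ d² and x := ⌊2r/d⌋ ≥ 2. Then (⌈2r/d⌉ + 1)·(k − 1) + ⌊2r/d⌋ ≤ d − 2, where ⌈·⌉ and ⌊·⌋ denote the ceiling and floor of the rational number 2r/d. -/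
/-- The case `x = ⌊2r/d⌋ ≥ 2` of the appendix inequality: for positive
integers `d, k, r` with `4·r·k ≤ d²`,
`(⌈2r/d⌉ + 1)·(k - 1) + ⌊2r/d⌋ ≤ d - 2`. -/
theorem stmt_12 (d k r : ℕ) (hd : 0 < d) (hk : 0 < k) (hr : 0 < r)
    (hrk : 4 * r * k ≤ d ^ 2) (hx : 2 ≤ ⌊(2 * (r : ℚ) / d)⌋) :
    (⌈(2 * (r : ℚ) / d)⌉ + 1) * ((k : ℤ) - 1) + ⌊(2 * (r : ℚ) / d)⌋
      ≤ (d : ℤ) - 2 := by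
  set x : ℤ := ⌊(2 * (r : ℚ) / d)⌋ with hxdef
  have hc : ⌈(2 * (r : ℚ) / d)⌉ ≤ x + 1 := Int.ceil_le_floor_add_one _
  have hdq : (0 : ℚ) < d := by exact_mod_cast hd
  have hfl : (x : ℚ) ≤ 2 * (r : ℚ) / d := Int.floor_le _
  have hxd : (x : ℚ) * d ≤ 2 * r := by
    calc (x : ℚ) * d ≤ (2 * (r : ℚ) / d) * d := by nlinarith
    _ = 2 * r := by field_simp
  have hxdZ : x * d ≤ 2 * r := by exact_mod_cast hxd
  have hrkZ : 4 * (r : ℤ) * k ≤ (d : ℤ) ^ 2 := by exact_mod_cast hrk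
  have hkZ : (1 : ℤ) ≤ k := by exact_mod_cast hk
  have hdZ : (1 : ℤ) ≤ d := by exact_mod_cast hd
  -- 2*x*k ≤ d
  have h2xk : 2 * x * k ≤ d := by
    nlinarith [mul_le_mul_of_nonneg_right hxdZ (by positivity : (0:ℤ) ≤ 2 * k)]
  nlinarith [mul_le_mul_of_nonneg_right hc (by linarith : (0:ℤ) ≤ (k:ℤ) - 1),
    mul_le_mul_of_nonneg_right (by linarith : (2:ℤ) ≤ x) (by linarith : (0:ℤ) ≤ (k:ℤ))]
end
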